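/- arXiv:0803.1333 — 2 statements merged into one kernel-verified Lean document; each statement's English description precedes it below -/
import Mathlib

section
/- Let S be a finite symmetric subset (v ∈ S ⟹ -v ∈ S) of the unit sphere S^{n-1} ⊂ ℝ^n spanning ℝ^n. Then there exists a basis B of ℝ^n contained in S and a linear map F : ℝ^n → ℝ^n arbitrarily close to the identity such that |Fv| = |v| for v ∈ S with ±v ∈ B, and |Fv| > |v| for all other v ∈ S. -/
open Matrix Submodule Module

/-- The Euclidean norm of a vector in `ℝⁿ`. -/
noncomputable def enorm {n : ℕ} (w : Fin n → ℝ) : ℝ := Real.sqrt (∑ i, (w i) ^ 2)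

/-- The real vector associated to an integer vector. -/
def intVec {n : ℕ} (v : Fin n → ℤ) : Fin n → ℝ := fun i => (v i : ℝ)

/-- The systole (first minimum) of the lattice `Aℤⁿ`. -/
noncomputable def syst1 {n : ℕ} (A : Matrix (Fin n) (Fin n) ℝ) : ℝ :=
  sInf {r : ℝ | ∃ v : Fin n → ℤ, v ≠ 0 ∧ _root_.enorm (A.mulVec (intVec v)) = r}

/-- The `i`-th systole (Minkowski's `i`-th successive minimum) of the lattice `Aℤⁿ`. -/
noncomputable def systI {n : ℕ} (A : Matrix (Fin n) (Fin n) ℝ) (i : ℕ) : ℝ :=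
  sInf {r : ℝ | i ≤ Module.finrank ℝ (Submodule.span ℝ
    (intVec '' {v : Fin n → ℤ | _root_.enorm (A.mulVec (intVec v)) < r}))}

/-- The set of shortest (nonzero) integer vectors of `A`. -/
noncomputable def S1 {n : ℕ} (A : Matrix (Fin n) (Fin n) ℝ) : Set (Fin n → ℤ) :=
  {v | v ≠ 0 ∧ _root_.enorm (A.mulVec (intVec v)) = syst1 A}

/-- `A` is well-rounded if its shortest vectors span `ℝⁿ`. -/
noncomputable def WellRounded {n : ℕ} (A : Matrix (Fin n) (Fin n) ℝ) : Prop :=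
  Submodule.span ℝ (intVec '' S1 A) = ⊤

/-- The span of the integer vectors realized up to the `i`-th minimum. -/
noncomputable def LambdaI {n : ℕ} (A : Matrix (Fin n) (Fin n) ℝ) (i : ℕ) :
    Submodule ℝ (Fin n → ℝ) :=
  Submodule.span ℝ (intVec '' {v : Fin n → ℤ | _root_.enorm (A.mulVec (intVec v)) ≤ systI A i})

/-- The real matrix associated to an element of `SL_n(ℤ)`. -/
def SLZtoR {n : ℕ} (γ : Matrix.SpecialLinearGroup (Fin n) ℤ) : Matrix (Fin n) (Fin n) ℝ :=
  (γ : Matrix (Fin n) (Fin n) ℤ).map (Int.cast)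


open scoped RealInnerProductSpace

namespace Stmt10Aux

variable {n : ℕ}

/-- rank one tensor of a vector, in plain function space -/
def rOne (v : EuclideanSpace ℝ (Fin n)) : (Fin n × Fin n) → ℝ := fun p => v p.1 * v p.2

lemma rOne_neg (v : EuclideanSpace ℝ (Fin n)) : rOne (-v) = rOne v := by
  funext p
  simp only [rOne, PiLp.neg_apply]
  ring

/-- quadratic form of a matrix -/
def qf (A : Matrix (Fin n) (Fin n) ℝ) (x : EuclideanSpace ℝ (Fin n)) : ℝ :=
  ∑ i, (∑ j, A i j * x j) * x i

lemma qf_toCLM (A : Matrix (Fin n) (Fin n) ℝ) (x : EuclideanSpace ℝ (Fin n)) :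
    ⟪(Matrix.toEuclideanCLM (𝕜 := ℝ) A) x, x⟫ = qf A x := by
  rw [PiLp.inner_apply]
  apply Finset.sum_congr rfl
  intro i _
  have : (Matrix.toEuclideanCLM (𝕜 := ℝ) A) x i = ∑ j, A i j * x j := rfl
  simp [this]
  ring

lemma qf_dot (A : Matrix (Fin n) (Fin n) ℝ) (x : Fin n → ℝ) :
    dotProduct (star x) (A.mulVec x) = qf A (WithLp.toLp 2 x) := by
  unfold Matrix.mulVec dotProduct qf
  apply Finset.sum_congr rfl
  intro i _
  simp only [Pi.star_apply, star_trivial]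
  rw [mul_comm]

lemma qf_one (x : EuclideanSpace ℝ (Fin n)) : qf 1 x = ∑ i, (x i)^2 := by
  unfold qf
  apply Finset.sum_congr rfl
  intro i _
  rw [Finset.sum_eq_single i]
  · simp [Matrix.one_apply, pow_two]
  · intro j _ hj
    simp [Matrix.one_apply, Ne.symm hj]
  · simp

lemma qf_add (A B : Matrix (Fin n) (Fin n) ℝ) (x : EuclideanSpace ℝ (Fin n)) :
    qf (A + B) x = qf A x + qf B x := by
  unfold qf
  rw [← Finset.sum_add_distrib]
  apply Finset.sum_congr rfl
  intro i _
  rw [← add_mul, ← Finset.sum_add_distrib]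
  congr 1
  apply Finset.sum_congr rfl
  intro j _
  simp [Matrix.add_apply]
  ring

lemma qf_smul (t : ℝ) (A : Matrix (Fin n) (Fin n) ℝ) (x : EuclideanSpace ℝ (Fin n)) :
    qf (t • A) x = t * qf A x := by
  unfold qf
  rw [Finset.mul_sum]
  apply Finset.sum_congr rfl
  intro i _
  have h : ∑ j, (t • A) i j * x j = t * ∑ j, A i j * x j := by
    rw [Finset.mul_sum]
    apply Finset.sum_congr rfl
    intro j _
    simp [Matrix.smul_apply]
    ring
  rw [h]
  ring

lemma qf_neg (A : Matrix (Fin n) (Fin n) ℝ) (x : EuclideanSpace ℝ (Fin n)) :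
    qf A (-x) = qf A x := by
  unfold qf
  apply Finset.sum_congr rfl
  intro i _
  have h : ∑ j, A i j * (-x) j = -∑ j, A i j * x j := by
    rw [← Finset.sum_neg_distrib]
    apply Finset.sum_congr rfl
    intro j _
    simp only [PiLp.neg_apply]
    ring
  rw [h]
  simp only [PiLp.neg_apply]
  ring

lemma sum_sq_eq_normsq (x : EuclideanSpace ℝ (Fin n)) : ∑ i, (x i)^2 = ‖x‖^2 := by
  rw [← real_inner_self_eq_norm_sq, PiLp.inner_apply]
  apply Finset.sum_congr rfl
  intro i _
  simp [pow_two]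

/-- the functional X ↦ ∑ₚ X p * c p.1 * c p.2 -/
def psiF (c : Fin n → ℝ) : ((Fin n × Fin n) → ℝ) →ₗ[ℝ] ℝ where
  toFun X := ∑ p : Fin n × Fin n, X p * (c p.1 * c p.2)
  map_add' X Y := by
    simp only [Pi.add_apply, add_mul]
    rw [Finset.sum_add_distrib]
  map_smul' r X := by
    simp only [Pi.smul_apply, smul_eq_mul, RingHom.id_apply]
    rw [Finset.mul_sum]
    apply Finset.sum_congr rfl
    intro p _
    ring

def trF : ((Fin n × Fin n) → ℝ) →ₗ[ℝ] ℝ where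
  toFun X := ∑ k, X (k, k)
  map_add' X Y := by
    simp only [Pi.add_apply]
    rw [Finset.sum_add_distrib]
  map_smul' r X := by
    simp only [Pi.smul_apply, smul_eq_mul, RingHom.id_apply, Finset.mul_sum]

lemma psiF_rOne (c : Fin n → ℝ) (v : EuclideanSpace ℝ (Fin n)) :
    psiF c (rOne v) = (∑ k, v k * c k)^2 := by
  simp only [psiF, rOne, LinearMap.coe_mk, AddHom.coe_mk]
  rw [pow_two, Finset.sum_mul_sum, Fintype.sum_prod_type]
  apply Finset.sum_congr rfl
  intro i _
  apply Finset.sum_congr rfl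
  intro j _
  ring

lemma trF_rOne (v : EuclideanSpace ℝ (Fin n)) : trF (rOne v) = ∑ k, (v k)^2 := by
  simp only [trF, rOne, LinearMap.coe_mk, AddHom.coe_mk]
  apply Finset.sum_congr rfl
  intro k _
  ring

/-- a continuous linear functional on a pi type is given by its values on basis vectors -/
lemma clm_pi_decomp {ι : Type*} [Fintype ι] [DecidableEq ι] (f : (ι → ℝ) →L[ℝ] ℝ) (x : ι → ℝ) :
    f x = ∑ i, x i * f (fun j => if i = j then (1:ℝ) else 0) := by
  conv_lhs => rw [pi_eq_sum_univ x]
  rw [map_sum]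
  apply Finset.sum_congr rfl
  intro i _
  rw [_root_.map_smul]
  simp

/-- a linear functional on EuclideanSpace equals the explicit coordinate sum -/
lemma lin_coord_decomp (g : EuclideanSpace ℝ (Fin n) →ₗ[ℝ] ℝ) (v : EuclideanSpace ℝ (Fin n)) :
    g v = ∑ k, v k * g (EuclideanSpace.single k 1) := by
  have hv : v = ∑ k, v k • EuclideanSpace.single k (1:ℝ) := by
    ext j
    rw [WithLp.ofLp_sum, Finset.sum_apply]
    simp only [PiLp.smul_apply, EuclideanSpace.single_apply, smul_eq_mul]
    rw [Finset.sum_eq_single j]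
    · simp
    · intro b _ hb
      rw [if_neg (fun h => hb h.symm), mul_zero]
    · simp
  conv_lhs => rw [hv]
  rw [map_sum]
  apply Finset.sum_congr rfl
  intro k _
  rw [_root_.map_smul]
  simp

noncomputable def e0 : Basis (Fin n) ℝ (EuclideanSpace ℝ (Fin n)) := PiLp.basisFun 2 ℝ (Fin n)

lemma det_update (b : Basis (Fin n) ℝ (EuclideanSpace ℝ (Fin n)))
    (w : EuclideanSpace ℝ (Fin n)) (i : Fin n) :
    e0.det (Function.update (⇑b) i w) = b.repr w i * e0.det ⇑b := by
  have hw : w = ∑ j, b.repr w j • b j := (b.sum_repr w).symm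
  conv_lhs => rw [hw]
  have h1 : e0.det (Function.update (⇑b) i (∑ j, b.repr w j • b j))
      = ∑ j, e0.det (Function.update (⇑b) i (b.repr w j • b j)) := by
    exact e0.det.toMultilinearMap.map_update_sum Finset.univ i (fun j => b.repr w j • b j) ⇑b
  rw [h1]
  rw [Finset.sum_eq_single i]
  · rw [AlternatingMap.map_update_smul, Function.update_eq_self]
    rfl
  · intro j _ hji
    rw [AlternatingMap.map_update_smul]
    have hz : e0.det (Function.update (⇑b) i (b j)) = 0 := by
      apply e0.det.map_eq_zero_of_eq _ (i := i) (j := j)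
      · rw [Function.update_self, Function.update_of_ne hji]
      · exact fun h => hji h.symm
    rw [hz, smul_zero]
  · simp

lemma exists_min_basis (S : Finset (EuclideanSpace ℝ (Fin n)))
    (hspan : Submodule.span ℝ (S : Set (EuclideanSpace ℝ (Fin n))) = ⊤) :
    ∃ v0 : Fin n → EuclideanSpace ℝ (Fin n), (∀ i, v0 i ∈ S) ∧ LinearIndependent ℝ v0 ∧
      ∀ u : Fin n → EuclideanSpace ℝ (Fin n), (∀ i, u i ∈ S) → LinearIndependent ℝ u →
        |e0.det v0| ≤ |e0.det u| := by
  classical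
  set C : Set (Fin n → EuclideanSpace ℝ (Fin n)) :=
    {v | (∀ i, v i ∈ S) ∧ LinearIndependent ℝ v} with hC
  have hfin : C.Finite := by
    apply Set.Finite.subset (Set.Finite.pi (fun _ : Fin n => S.finite_toSet))
    intro v hv
    rw [Set.mem_univ_pi]
    exact hv.1
  have hne : C.Nonempty := by
    obtain ⟨s, hsub, hspan2, hli⟩ := exists_linearIndependent ℝ (S : Set (EuclideanSpace ℝ (Fin n)))
    rw [hspan] at hspan2
    haveI : Fintype s := Set.Finite.fintype (S.finite_toSet.subset hsub)
    have hr : Submodule.span ℝ (Set.range ((↑) : s → EuclideanSpace ℝ (Fin n))) = ⊤ := by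
      rw [Subtype.range_coe]; exact hspan2
    let B0 : Basis s ℝ (EuclideanSpace ℝ (Fin n)) := Basis.mk hli hr.ge
    have hcard : Fintype.card s = n := by
      have h1 := Module.finrank_eq_card_basis B0
      rw [finrank_euclideanSpace_fin] at h1
      omega
    let e : s ≃ Fin n := Fintype.equivFinOfCardEq hcard
    refine ⟨fun i => ((e.symm i : s) : EuclideanSpace ℝ (Fin n)), fun i => hsub (e.symm i).2, ?_⟩
    exact hli.comp e.symm e.symm.injective
  obtain ⟨v0, hv0, hmin⟩ := Set.exists_min_image C (fun v => |e0.det v|) hfin hne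
  exact ⟨v0, hv0.1, hv0.2, fun u hu1 hu2 => hmin u ⟨hu1, hu2⟩⟩

lemma coord_bound (S : Finset (EuclideanSpace ℝ (Fin n)))
    (v0 : Fin n → EuclideanSpace ℝ (Fin n)) (h0 : ∀ i, v0 i ∈ S)
    (hmin : ∀ u : Fin n → EuclideanSpace ℝ (Fin n), (∀ i, u i ∈ S) → LinearIndependent ℝ u →
        |e0.det v0| ≤ |e0.det u|)
    (b : Basis (Fin n) ℝ (EuclideanSpace ℝ (Fin n))) (hb : ⇑b = v0)
    (w : EuclideanSpace ℝ (Fin n)) (hw : w ∈ S) (i : Fin n) (hne : b.repr w i ≠ 0) :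
    1 ≤ |b.repr w i| := by
  classical
  have hdetb : e0.det ⇑b ≠ 0 := (e0.isUnit_det b).ne_zero
  have hdetu : e0.det (Function.update (⇑b) i w) = b.repr w i * e0.det ⇑b := det_update b w i
  have hu1 : ∀ k, Function.update (⇑b) i w k ∈ S := by
    intro k
    rcases eq_or_ne k i with rfl | hk
    · rw [Function.update_self]; exact hw
    · rw [Function.update_of_ne hk]
      rw [hb]; exact h0 k
  have hu2 : LinearIndependent ℝ (Function.update (⇑b) i w) := by
    have hunit : IsUnit (e0.det (Function.update (⇑b) i w)) := by
      rw [hdetu, isUnit_iff_ne_zero]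
      exact mul_ne_zero hne hdetb
    exact ((Module.Basis.is_basis_iff_det e0).mpr hunit).1
  have h := hmin _ hu1 hu2
  rw [← hb] at h
  rw [hdetu, abs_mul] at h
  have hpos : 0 < |e0.det ⇑b| := abs_pos.mpr hdetb
  nlinarith [h, hpos]

lemma coord_sq_sum (S : Finset (EuclideanSpace ℝ (Fin n)))
    (hsphere : ∀ v ∈ S, ‖v‖ = 1)
    (v0 : Fin n → EuclideanSpace ℝ (Fin n)) (h0 : ∀ i, v0 i ∈ S)
    (hmin : ∀ u : Fin n → EuclideanSpace ℝ (Fin n), (∀ i, u i ∈ S) → LinearIndependent ℝ u →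
        |e0.det v0| ≤ |e0.det u|)
    (b : Basis (Fin n) ℝ (EuclideanSpace ℝ (Fin n))) (hb : ⇑b = v0)
    (w : EuclideanSpace ℝ (Fin n)) (hw : w ∈ S)
    (hnot : ¬∃ i, w = v0 i ∨ w = -(v0 i)) :
    2 ≤ ∑ j, (b.repr w j)^2 := by
  classical
  have hwnorm : ‖w‖ = 1 := hsphere w hw
  have hw0 : w ≠ 0 := by
    intro h
    rw [h, norm_zero] at hwnorm
    norm_num at hwnorm
  have hrepr0 : b.repr w ≠ 0 := by
    intro h
    apply hw0
    have h2 : b.repr w = b.repr 0 := by rw [h, map_zero]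
    exact b.repr.injective h2
  obtain ⟨i1, hi1⟩ : ∃ i, b.repr w i ≠ 0 := by
    by_contra hcon
    push_neg at hcon
    exact hrepr0 (Finsupp.ext hcon)
  obtain ⟨i2, hi2, hi12⟩ : ∃ i2, b.repr w i2 ≠ 0 ∧ i2 ≠ i1 := by
    by_contra hcon
    push_neg at hcon
    have hwrep : w = b.repr w i1 • b i1 := by
      have h1 := b.sum_repr w
      rw [Finset.sum_eq_single i1] at h1
      · exact h1.symm
      · intro j _ hj
        have hz : b.repr w j = 0 := by
          by_contra hnz
          exact hj (hcon j hnz)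
        rw [hz, zero_smul]
      · simp
    have habs : |b.repr w i1| = 1 := by
      have : ‖w‖ = |b.repr w i1| * ‖b i1‖ := by
        rw [hwrep, norm_smul]
        simp [Real.norm_eq_abs]
      rw [hwnorm, hb] at this
      rw [hsphere (v0 i1) (h0 i1), mul_one] at this
      exact this.symm
    rcases (abs_eq (by norm_num : (0:ℝ) ≤ 1)).mp habs with h | h
    · exact absurd ⟨i1, Or.inl (by rw [hwrep, h, one_smul, hb])⟩ hnot
    · exact absurd ⟨i1, Or.inr (by rw [hwrep, h, neg_one_smul, hb])⟩ hnot
  have h1 : 1 ≤ |b.repr w i1| := coord_bound S v0 h0 hmin b hb w hw i1 hi1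
  have h2 : 1 ≤ |b.repr w i2| := coord_bound S v0 h0 hmin b hb w hw i2 hi2
  have hss : ∑ j ∈ ({i1, i2} : Finset (Fin n)), (b.repr w j)^2 ≤ ∑ j, (b.repr w j)^2 :=
    Finset.sum_le_sum_of_subset_of_nonneg (Finset.subset_univ _) (fun j _ _ => sq_nonneg _)
  rw [Finset.sum_pair (Ne.symm hi12)] at hss
  nlinarith [hss, h1, h2, sq_abs ((b.repr w) i1), sq_abs ((b.repr w) i2)]

end Stmt10Aux

namespace Stmt10Aux
open Pointwise

lemma exists_sep_matrix {n : ℕ} (S : Finset (EuclideanSpace ℝ (Fin n)))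
    (hsphere : ∀ v ∈ S, ‖v‖ = 1)
    (v0 : Fin n → EuclideanSpace ℝ (Fin n)) (h0 : ∀ i, v0 i ∈ S)
    (hmin : ∀ u : Fin n → EuclideanSpace ℝ (Fin n), (∀ i, u i ∈ S) → LinearIndependent ℝ u →
        |e0.det v0| ≤ |e0.det u|)
    (b : Basis (Fin n) ℝ (EuclideanSpace ℝ (Fin n))) (hb : ⇑b = v0)
    (W : Finset (EuclideanSpace ℝ (Fin n)))
    (hWmem : ∀ w, w ∈ W ↔ w ∈ S ∧ ¬∃ i, w = v0 i ∨ w = -(v0 i))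
    (hWne : W.Nonempty) :
    ∃ (M : Matrix (Fin n) (Fin n) ℝ) (c : ℝ), M.IsHermitian ∧ 0 < c ∧
      (∀ i, qf M (v0 i) = 0) ∧ (∀ w ∈ W, c ≤ qf M w) := by
  classical
  set Wimg : Finset ((Fin n × Fin n) → ℝ) := W.image rOne with hWimg
  set K : Set ((Fin n × Fin n) → ℝ) :=
    convexHull ℝ (Wimg : Set ((Fin n × Fin n) → ℝ)) +
      (Submodule.span ℝ (Set.range (fun i => rOne (v0 i))) :
        Set ((Fin n × Fin n) → ℝ)) with hK
  set ci : Fin n → Fin n → ℝ :=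
    fun i k => b.coord i (EuclideanSpace.single k (1:ℝ)) with hci
  have hpsi : ∀ (i : Fin n) (v : EuclideanSpace ℝ (Fin n)),
      psiF (ci i) (rOne v) = (b.repr v i)^2 := by
    intro i v
    rw [psiF_rOne]
    congr 1
    rw [← lin_coord_decomp (b.coord i) v]
    exact (b.coord_apply i v).symm
  have hpsib : ∀ i j : Fin n, psiF (ci i) (rOne (v0 j)) = if j = i then 1 else 0 := by
    intro i j
    rw [hpsi i (v0 j), ← hb, Basis.repr_self]
    rcases eq_or_ne j i with rfl | hji
    · simp
    · rw [Finsupp.single_apply, if_neg hji]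
      norm_num
  have htr : ∀ v ∈ S, trF (rOne v) = 1 := by
    intro v hv
    rw [trF_rOne, sum_sq_eq_normsq, hsphere v hv]
    norm_num
  have h0K : (0 : (Fin n × Fin n) → ℝ) ∉ K := by
    intro hmem
    rw [hK, Set.mem_add] at hmem
    obtain ⟨x, hx, y, hy, hxy⟩ := hmem
    rw [Finset.convexHull_eq] at hx
    obtain ⟨g, hg0, hg1, hgx⟩ := hx
    rw [Finset.centerMass_eq_of_sum_1 _ _ hg1] at hgx
    simp only [id] at hgx
    rw [SetLike.mem_coe, mem_span_range_iff_exists_fun] at hy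
    obtain ⟨μ, hμ⟩ := hy
    have happ : ∀ L : ((Fin n × Fin n) → ℝ) →ₗ[ℝ] ℝ,
        (∑ z ∈ Wimg, g z * L z) + (∑ j, μ j * L (rOne (v0 j))) = 0 := by
      intro L
      have h1 : L x + L y = 0 := by
        rw [← map_add, hxy, map_zero]
      rw [← hgx, ← hμ, map_sum, map_sum] at h1
      simp only [_root_.map_smul, smul_eq_mul] at h1
      exact h1
    have hμval : ∀ i, μ i = -∑ z ∈ Wimg, g z * psiF (ci i) z := by
      intro i
      have h1 := happ (psiF (ci i))
      have h2 : ∑ j, μ j * psiF (ci i) (rOne (v0 j)) = μ i := by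
        rw [Finset.sum_eq_single i]
        · rw [hpsib i i, if_pos rfl, mul_one]
        · intro j _ hj
          rw [hpsib i j, if_neg hj, mul_zero]
        · simp
      rw [h2] at h1
      linarith
    have htreq := happ trF
    have htr1 : ∑ z ∈ Wimg, g z * trF z = 1 := by
      have hgz : ∀ z ∈ Wimg, g z * trF z = g z := by
        intro z hz
        rw [hWimg] at hz
        obtain ⟨w, hwW, rfl⟩ := Finset.mem_image.mp hz
        rw [htr w ((hWmem w).mp hwW).1, mul_one]
      rw [Finset.sum_congr rfl hgz, hg1]
    have htr2 : ∑ j, μ j * trF (rOne (v0 j)) = ∑ j, μ j := by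
      apply Finset.sum_congr rfl
      intro j _
      rw [htr (v0 j) (h0 j), mul_one]
    rw [htr1, htr2] at htreq
    have hpsisum : ∀ z ∈ Wimg, 2 ≤ ∑ i, psiF (ci i) z := by
      intro z hz
      rw [hWimg] at hz
      obtain ⟨w, hwW, rfl⟩ := Finset.mem_image.mp hz
      have hw := (hWmem w).mp hwW
      have h2 := coord_sq_sum S hsphere v0 h0 hmin b hb w hw.1 hw.2
      calc (2:ℝ) ≤ ∑ i, (b.repr w i)^2 := h2
        _ = ∑ i, psiF (ci i) (rOne w) := by
            apply Finset.sum_congr rfl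
            intro i _
            rw [hpsi i w]
    have hsum2 : ∑ j, μ j = -∑ z ∈ Wimg, g z * (∑ i, psiF (ci i) z) := by
      have e1 : ∑ j, μ j = ∑ j, -∑ z ∈ Wimg, g z * psiF (ci j) z :=
        Finset.sum_congr rfl (fun j _ => hμval j)
      rw [e1, Finset.sum_neg_distrib, Finset.sum_comm]
      congr 1
      apply Finset.sum_congr rfl
      intro z _
      rw [Finset.mul_sum]
    have hge2 : 2 ≤ ∑ z ∈ Wimg, g z * (∑ i, psiF (ci i) z) := by
      calc (2:ℝ) = ∑ z ∈ Wimg, g z * 2 := by rw [← Finset.sum_mul, hg1, one_mul]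
        _ ≤ ∑ z ∈ Wimg, g z * (∑ i, psiF (ci i) z) := by
            apply Finset.sum_le_sum
            intro z hz
            exact mul_le_mul_of_nonneg_left (hpsisum z hz) (hg0 z hz)
    rw [hsum2] at htreq
    linarith
  have hconv : Convex ℝ K := by
    rw [hK]
    exact (convex_convexHull ℝ _).add (Submodule.span ℝ _).convex
  have hclosed : IsClosed K := by
    rw [hK]
    exact IsClosed.add_left_of_isCompact
      (Submodule.closed_of_finiteDimensional _)
      (Set.Finite.isCompact_convexHull (𝕜 := ℝ) (Wimg.finite_toSet))
  obtain ⟨f, u, hfK, hf0⟩ := geometric_hahn_banach_closed_point hconv hclosed h0K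
  rw [map_zero] at hf0
  have hmemK0 : ∀ w ∈ W, rOne w ∈ K := by
    intro w hw
    rw [hK]
    have h1 : rOne w ∈ (Wimg : Set ((Fin n × Fin n) → ℝ)) := by
      exact_mod_cast Finset.mem_image_of_mem rOne hw
    have h2 := Set.add_mem_add (subset_convexHull ℝ _ h1)
      (Submodule.zero_mem (Submodule.span ℝ (Set.range (fun i => rOne (v0 i)))))
    simpa using h2
  have hmemK : ∀ w ∈ W, ∀ (j : Fin n) (t : ℝ), rOne w + t • rOne (v0 j) ∈ K := by
    intro w hw j t
    rw [hK]
    apply Set.add_mem_add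
    · apply subset_convexHull
      exact_mod_cast Finset.mem_image_of_mem rOne hw
    · exact Submodule.smul_mem _ t (Submodule.subset_span (Set.mem_range_self j))
  obtain ⟨w0, hw0⟩ := hWne
  have hfb : ∀ j, f (rOne (v0 j)) = 0 := by
    intro j
    by_contra hc
    have hkey : ∀ t : ℝ, f (rOne w0) + t * f (rOne (v0 j)) < u := by
      intro t
      have h3 := hfK _ (hmemK w0 hw0 j t)
      rw [map_add, _root_.map_smul, smul_eq_mul] at h3
      exact h3
    have h1 := hkey ((u - f (rOne w0)) / f (rOne (v0 j)))
    rw [div_mul_cancel₀ _ hc] at h1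
    linarith
  have hfw : ∀ w ∈ W, f (rOne w) < u := fun w hw => hfK _ (hmemK0 w hw)
  set M : Matrix (Fin n) (Fin n) ℝ :=
    Matrix.of (fun i j => -((f (fun q => if (i,j) = q then (1:ℝ) else 0)
      + f (fun q => if (j,i) = q then (1:ℝ) else 0)) / 2)) with hM
  have hherm : M.IsHermitian := by
    unfold Matrix.IsHermitian
    ext i j
    rw [Matrix.conjTranspose_apply, hM]
    simp only [Matrix.of_apply, star_trivial]
    ring
  have hqfM : ∀ v : EuclideanSpace ℝ (Fin n), qf M v = -f (rOne v) := by
    intro v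
    have hdec : f (rOne v)
        = ∑ i, ∑ j, (v i * v j) * f (fun q => if (i,j) = q then (1:ℝ) else 0) := by
      rw [clm_pi_decomp f (rOne v), Fintype.sum_prod_type]
      rfl
    have hswap : ∑ i, ∑ j, (v i * v j) * f (fun q => if (j,i) = q then (1:ℝ) else 0)
        = ∑ i, ∑ j, (v i * v j) * f (fun q => if (i,j) = q then (1:ℝ) else 0) := by
      rw [Finset.sum_comm]
      apply Finset.sum_congr rfl
      intro i _
      apply Finset.sum_congr rfl
      intro j _
      ring_nf
    unfold qf
    have hstep1 : ∑ i, (∑ j, M i j * v j) * v i = ∑ i, ∑ j, M i j * v j * v i := by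
      apply Finset.sum_congr rfl
      intro i _
      rw [Finset.sum_mul]
    rw [hstep1]
    have hstep2 : ∑ i, ∑ j, M i j * v j * v i
        = ∑ i, ∑ j, (-(1:ℝ)/2) * ((v i * v j) * f (fun q => if (i,j) = q then (1:ℝ) else 0)
            + (v i * v j) * f (fun q => if (j,i) = q then (1:ℝ) else 0)) := by
      apply Finset.sum_congr rfl
      intro i _
      apply Finset.sum_congr rfl
      intro j _
      rw [hM]
      simp only [Matrix.of_apply]
      ring
    rw [hstep2]
    have hfac : ∀ (gg : Fin n → Fin n → ℝ),
        ∑ i, ∑ j, (-(1:ℝ)/2) * gg i j = (-(1:ℝ)/2) * ∑ i, ∑ j, gg i j := by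
      intro gg
      rw [Finset.mul_sum]
      apply Finset.sum_congr rfl
      intro i _
      rw [Finset.mul_sum]
    rw [hfac]
    have hsplit : (∑ i, ∑ j, ((v i * v j) * f (fun q => if (i,j) = q then (1:ℝ) else 0)
          + (v i * v j) * f (fun q => if (j,i) = q then (1:ℝ) else 0)))
        = (∑ i, ∑ j, (v i * v j) * f (fun q => if (i,j) = q then (1:ℝ) else 0))
          + (∑ i, ∑ j, (v i * v j) * f (fun q => if (j,i) = q then (1:ℝ) else 0)) := by
      rw [← Finset.sum_add_distrib]
      apply Finset.sum_congr rfl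
      intro i _
      rw [← Finset.sum_add_distrib]
    rw [hsplit, hswap, ← hdec]
    ring
  refine ⟨M, -u, hherm, by linarith, ?_, ?_⟩
  · intro i
    rw [hqfM, hfb i, neg_zero]
  · intro w hw
    rw [hqfM]
    have h4 := hfw w hw
    linarith

end Stmt10Aux

set_option maxHeartbeats 1000000 in
open scoped RealInnerProductSpace in
/-- for a finite symmetric spanning subset `S` of the unit sphere, there
is a basis `B ⊆ S` and a linear map `F` arbitrarily close to the identity preserving
the norms of `±B` and strictly increasing the norms of all other elements of `S`. -/
theorem stmt10 (n : ℕ) (S : Finset (EuclideanSpace ℝ (Fin n)))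
    (hsphere : ∀ v ∈ S, ‖v‖ = 1)
    (hsymm : ∀ v ∈ S, -v ∈ S)
    (hspan : Submodule.span ℝ (S : Set (EuclideanSpace ℝ (Fin n))) = ⊤) :
    ∀ ε > (0 : ℝ), ∃ (b : Basis (Fin n) ℝ (EuclideanSpace ℝ (Fin n)))
      (F : EuclideanSpace ℝ (Fin n) →L[ℝ] EuclideanSpace ℝ (Fin n)),
        (∀ i, b i ∈ S) ∧
        ‖F - ContinuousLinearMap.id ℝ (EuclideanSpace ℝ (Fin n))‖ < ε ∧
        ∀ v ∈ S,
          ((∃ i, v = b i ∨ v = -(b i)) → ‖F v‖ = ‖v‖) ∧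
          (¬(∃ i, v = b i ∨ v = -(b i)) → ‖F v‖ > ‖v‖) := by
  classical
  intro ε hε
  obtain ⟨v0, h0, hli, hmin⟩ := Stmt10Aux.exists_min_basis S hspan
  have hspan0 : Submodule.span ℝ (Set.range v0) = ⊤ :=
    hli.span_eq_top_of_card_eq_finrank' (by simp [finrank_euclideanSpace_fin])
  let b : Basis (Fin n) ℝ (EuclideanSpace ℝ (Fin n)) := Basis.mk hli hspan0.ge
  have hb : ⇑b = v0 := Basis.coe_mk _ _
  have hbi : ∀ i, b i = v0 i := fun i => congrFun hb i
  have hid1 : ContinuousLinearMap.id ℝ (EuclideanSpace ℝ (Fin n))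
      = (1 : EuclideanSpace ℝ (Fin n) →L[ℝ] EuclideanSpace ℝ (Fin n)) := rfl
  set W : Finset (EuclideanSpace ℝ (Fin n)) :=
    S.filter (fun w => ¬∃ i, w = v0 i ∨ w = -(v0 i)) with hW
  have hWmem : ∀ w, w ∈ W ↔ w ∈ S ∧ ¬∃ i, w = v0 i ∨ w = -(v0 i) := by
    intro w; rw [hW]; exact Finset.mem_filter
  have hcond : ∀ v : EuclideanSpace ℝ (Fin n),
      (∃ i, v = b i ∨ v = -(b i)) ↔ (∃ i, v = v0 i ∨ v = -(v0 i)) := by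
    intro v
    constructor
    · rintro ⟨i, h⟩; exact ⟨i, by rwa [hbi i] at h⟩
    · rintro ⟨i, h⟩; exact ⟨i, by rwa [hbi i]⟩
  rcases W.eq_empty_or_nonempty with hWe | hWne
  · refine ⟨b, 1, fun i => by rw [hbi i]; exact h0 i, ?_, ?_⟩
    · rw [hid1, sub_self, norm_zero]; exact hε
    · intro v hv
      constructor
      · intro _
        rw [ContinuousLinearMap.one_apply]
      · intro hcon
        exfalso
        have hvW : v ∈ W := (hWmem v).mpr ⟨hv, fun h => hcon ((hcond v).mpr h)⟩
        rw [hWe] at hvW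
        exact Finset.notMem_empty v hvW
  · obtain ⟨M, c, hherm, hcpos, hq0, hqW⟩ :=
      Stmt10Aux.exists_sep_matrix S hsphere v0 h0 hmin b hb W hWmem hWne
    set Mclm := Matrix.toEuclideanCLM (𝕜 := ℝ) M with hMclm
    set N : ℝ := ‖Mclm‖ with hNdef
    have hN0 : 0 ≤ N := norm_nonneg _
    set t : ℝ := min (ε/2) (1/2) / (N + 1) with htdef
    have hmin2 : 0 < min (ε/2) (1/2) := lt_min (by linarith) (by norm_num)
    have htpos : 0 < t := div_pos hmin2 (by linarith)
    have htmul : t * (N + 1) = min (ε/2) (1/2) := div_mul_cancel₀ _ (by linarith)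
    have htN : t * N < min (ε/2) (1/2) := by nlinarith
    have htNhalf : t * N < 1/2 := lt_of_lt_of_le htN (min_le_right _ _)
    have htNeps : t * N < ε := by
      have h := lt_of_lt_of_le htN (min_le_left _ _)
      linarith
    have hqMabs : ∀ v : EuclideanSpace ℝ (Fin n), |Stmt10Aux.qf M v| ≤ N * ‖v‖^2 := by
      intro v
      rw [← Stmt10Aux.qf_toCLM, ← hMclm]
      calc |⟪Mclm v, v⟫| ≤ ‖Mclm v‖ * ‖v‖ := abs_real_inner_le_norm _ _
        _ ≤ N * ‖v‖^2 := by
          have h1 := Mclm.le_opNorm v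
          have h2 : (0:ℝ) ≤ ‖v‖ := norm_nonneg v
          rw [pow_two, ← mul_assoc]
          exact mul_le_mul_of_nonneg_right h1 h2
    set Q : Matrix (Fin n) (Fin n) ℝ := 1 + t • M with hQdef
    have hqfQ : ∀ v : EuclideanSpace ℝ (Fin n),
        Stmt10Aux.qf Q v = ‖v‖^2 + t * Stmt10Aux.qf M v := by
      intro v
      rw [hQdef, Stmt10Aux.qf_add, Stmt10Aux.qf_smul, Stmt10Aux.qf_one,
        Stmt10Aux.sum_sq_eq_normsq]
    have hQherm : Q.IsHermitian := by
      unfold Matrix.IsHermitian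
      rw [hQdef, Matrix.conjTranspose_add, Matrix.conjTranspose_smul,
        Matrix.conjTranspose_one, star_trivial, hherm]
    have hkey : ∀ (A B s : ℝ), A = s + t * B → |B| ≤ N * s → 0 < s → 0 < A := by
      intro A B s h1 h2 hs
      nlinarith [h1, neg_le_of_abs_le h2, htpos, htNhalf, hs,
        mul_le_mul_of_nonneg_left (neg_le_of_abs_le h2) htpos.le,
        mul_lt_mul_of_pos_right htNhalf hs]
    have hQpos : Q.PosDef := by
      refine Matrix.PosDef.of_dotProduct_mulVec_pos hQherm ?_
      intro x hx
      rw [Stmt10Aux.qf_dot]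
      let xE : EuclideanSpace ℝ (Fin n) := WithLp.toLp 2 x
      have hxE : xE ≠ 0 := by
        intro h; apply hx; simpa [xE] using congrArg WithLp.ofLp h
      have hnx : 0 < ‖xE‖ := norm_pos_iff.mpr hxE
      exact hkey _ _ _ (hqfQ xE) (hqMabs xE) (pow_pos hnx 2)
    have hQpsd : Q.PosSemidef := hQpos.posSemidef
    set G : Matrix (Fin n) (Fin n) ℝ := (open scoped MatrixOrder in CFC.sqrt Q) with hGdef
    have hGG : G * G = Q := by
      open scoped MatrixOrder in exact CFC.sqrt_mul_sqrt_self Q hQpsd.nonneg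
    have hGpsd : G.PosSemidef := by
      open scoped MatrixOrder in exact (CFC.sqrt_nonneg Q).posSemidef
    set F : EuclideanSpace ℝ (Fin n) →L[ℝ] EuclideanSpace ℝ (Fin n) :=
      Matrix.toEuclideanCLM (𝕜 := ℝ) G with hF
    have hFstar : star F = F := by
      rw [hF, ← map_star]
      congr 1
      rw [Matrix.star_eq_conjTranspose]
      exact hGpsd.1
    have hadj : ContinuousLinearMap.adjoint F = F := by
      rw [← ContinuousLinearMap.star_eq_adjoint]
      exact hFstar
    have hFsq : F * F = Matrix.toEuclideanCLM (𝕜 := ℝ) Q := by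
      rw [hF, ← _root_.map_mul, hGG]
    have hnorm2 : ∀ v : EuclideanSpace ℝ (Fin n), ‖F v‖^2 = Stmt10Aux.qf Q v := by
      intro v
      rw [← real_inner_self_eq_norm_sq]
      calc ⟪F v, F v⟫ = ⟪(ContinuousLinearMap.adjoint F) (F v), v⟫ :=
            (ContinuousLinearMap.adjoint_inner_left F v (F v)).symm
        _ = ⟪F (F v), v⟫ := by rw [hadj]
        _ = ⟪(Matrix.toEuclideanCLM (𝕜 := ℝ) Q) v, v⟫ := by rw [← hFsq]; rfl
        _ = Stmt10Aux.qf Q v := Stmt10Aux.qf_toCLM Q v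
    have hFpos : ∀ v : EuclideanSpace ℝ (Fin n), 0 ≤ ⟪F v, v⟫ := by
      intro v
      have h1 : ⟪F v, v⟫ = Stmt10Aux.qf G v := by rw [hF]; exact Stmt10Aux.qf_toCLM G v
      rw [h1, ← WithLp.toLp_ofLp 2 v, ← Stmt10Aux.qf_dot]
      exact hGpsd.dotProduct_mulVec_nonneg _
    have hlow : ∀ v : EuclideanSpace ℝ (Fin n), ‖v‖^2 ≤ ⟪(F + 1) v, v⟫ := by
      intro v
      rw [ContinuousLinearMap.add_apply, ContinuousLinearMap.one_apply, inner_add_left,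
        real_inner_self_eq_norm_sq v]
      linarith [hFpos v]
    have hinj : Function.Injective ⇑(F + 1) := by
      intro a b hab
      have hv : (F + 1) (a - b) = 0 := by rw [map_sub, hab, sub_self]
      have h2 := hlow (a - b)
      rw [hv, inner_zero_left] at h2
      have h3 : ‖a - b‖ = 0 := by nlinarith [norm_nonneg (a - b)]
      rw [norm_eq_zero, sub_eq_zero] at h3
      exact h3
    have hsurj : Function.Surjective ⇑(F + 1) := by
      exact (LinearMap.injective_iff_surjective
        (f := ((F + 1 : EuclideanSpace ℝ (Fin n) →L[ℝ] EuclideanSpace ℝ (Fin n)) :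
          EuclideanSpace ℝ (Fin n) →ₗ[ℝ] EuclideanSpace ℝ (Fin n)))).mp hinj
    have hbound : ∀ v : EuclideanSpace ℝ (Fin n), ‖(F - 1) v‖ ≤ (t * N) * ‖v‖ := by
      intro v
      obtain ⟨w, hwv⟩ := hsurj v
      have hwle : ‖w‖ ≤ ‖v‖ := by
        have h2 := hlow w
        rw [hwv] at h2
        have h3 : ⟪v, w⟫ ≤ ‖v‖ * ‖w‖ := real_inner_le_norm v w
        by_cases hw0 : ‖w‖ = 0
        · rw [hw0]; exact norm_nonneg v
        · have hwpos : 0 < ‖w‖ := lt_of_le_of_ne (norm_nonneg w) (Ne.symm hw0)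
          nlinarith
      have hid : (F - 1) v = t • (Mclm w) := by
        rw [← hwv]
        have h4 : (F - 1) ((F + 1) w) = ((F - 1) * (F + 1)) w := rfl
        rw [h4]
        have h5 : (F - 1) * (F + 1) = F * F - 1 := by
          rw [sub_mul, mul_add, mul_add, mul_one, one_mul, one_mul]
          abel
        have h6 : Matrix.toEuclideanCLM (𝕜 := ℝ) Q = 1 + t • Mclm := by
          rw [hQdef, map_add, _root_.map_one, _root_.map_smul, ← hMclm]
        rw [h5, hFsq, h6, add_sub_cancel_left]
        rfl
      rw [hid, norm_smul]
      simp only [Real.norm_eq_abs, abs_of_pos htpos]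
      calc t * ‖Mclm w‖ ≤ t * (N * ‖w‖) := by
            have h7 := Mclm.le_opNorm w
            exact mul_le_mul_of_nonneg_left h7 htpos.le
        _ ≤ (t * N) * ‖v‖ := by
            nlinarith [mul_le_mul_of_nonneg_left hwle (mul_nonneg htpos.le hN0)]
    have hopnorm : ‖F - 1‖ ≤ t * N :=
      ContinuousLinearMap.opNorm_le_bound _ (by positivity) hbound
    refine ⟨b, F, fun i => by rw [hbi i]; exact h0 i, ?_, ?_⟩
    · rw [hid1]
      exact lt_of_le_of_lt hopnorm htNeps
    · intro v hv
      have hv1 : ‖v‖ = 1 := hsphere v hv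
      constructor
      · intro hcase
        obtain ⟨i, hi⟩ := (hcond v).mp hcase
        have hqM0 : Stmt10Aux.qf M v = 0 := by
          rcases hi with rfl | rfl
          · exact hq0 i
          · rw [Stmt10Aux.qf_neg]; exact hq0 i
        have h8 : ‖F v‖^2 = ‖v‖^2 := by
          rw [hnorm2 v, hqfQ v, hqM0, mul_zero, add_zero]
        rw [← Real.sqrt_sq (norm_nonneg (F v)), ← Real.sqrt_sq (norm_nonneg v), h8]
      · intro hcase
        have hvW : v ∈ W := (hWmem v).mpr ⟨hv, fun h => hcase ((hcond v).mpr h)⟩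
        have h9 := hqW v hvW
        have h8 : ‖F v‖^2 = ‖v‖^2 + t * Stmt10Aux.qf M v := by rw [hnorm2 v, hqfQ v]
        have h10 : (1:ℝ) < ‖F v‖^2 := by
          rw [h8, hv1]
          nlinarith [mul_le_mul_of_nonneg_left h9 htpos.le]
        rw [gt_iff_lt, hv1]
        nlinarith [norm_nonneg (F v), h10]
end

section
/- The set of well-rounded points A ∈ SL_n(ℝ) such that the set of shortest vectors S₁(A) equals {±v₁,...,±v_n} for some linearly independent v₁,...,v_n ∈ ℤ^n (i.e., A has exactly 2n shortest vectors forming a symmetric basis) is dense in the set X of all well-rounded elements. -/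
open Matrix Submodule Module

namespace Aux11

variable {n : ℕ}

lemma enorm_nonneg (w : Fin n → ℝ) : 0 ≤ _root_.enorm w := Real.sqrt_nonneg _

lemma sum_sq_nonneg (w : Fin n → ℝ) : 0 ≤ ∑ i, (w i) ^ 2 :=
  Finset.sum_nonneg fun i _ => sq_nonneg _

lemma enorm_sq (w : Fin n → ℝ) : _root_.enorm w ^ 2 = ∑ i, (w i) ^ 2 :=
  Real.sq_sqrt (sum_sq_nonneg w)

lemma enorm_eq_zero {w : Fin n → ℝ} : _root_.enorm w = 0 ↔ w = 0 := by
  rw [_root_.enorm, Real.sqrt_eq_zero (sum_sq_nonneg w)]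
  constructor
  · intro h
    funext i
    have := (Finset.sum_eq_zero_iff_of_nonneg (fun i _ => sq_nonneg (w i))).mp h i
      (Finset.mem_univ i)
    simpa using pow_eq_zero_iff (n := 2) (by norm_num) |>.mp this
  · intro h; simp [h]

lemma abs_le_enorm (w : Fin n → ℝ) (i : Fin n) : |w i| ≤ _root_.enorm w := by
  rw [_root_.enorm, ← Real.sqrt_sq_eq_abs]
  exact Real.sqrt_le_sqrt (Finset.single_le_sum (fun j _ => sq_nonneg (w j))
    (Finset.mem_univ i))

lemma enorm_le_sum (w : Fin n → ℝ) : _root_.enorm w ≤ ∑ i, |w i| := by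
  rw [_root_.enorm]
  have h1 : ∑ i, (w i) ^ 2 ≤ (∑ i, |w i|) ^ 2 := by
    have := Finset.sum_sq_le_sq_sum_of_nonneg (f := fun i => |w i|)
      (s := Finset.univ) (fun i _ => abs_nonneg _)
    simpa [sq_abs] using this
  calc Real.sqrt (∑ i, (w i) ^ 2) ≤ Real.sqrt ((∑ i, |w i|) ^ 2) := Real.sqrt_le_sqrt h1
    _ = ∑ i, |w i| := Real.sqrt_sq (Finset.sum_nonneg fun i _ => abs_nonneg _)

lemma enorm_neg (w : Fin n → ℝ) : _root_.enorm (-w) = _root_.enorm w := by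
  unfold _root_.enorm; congr 1; apply Finset.sum_congr rfl; intro i _; simp

lemma enorm_smul (c : ℝ) (w : Fin n → ℝ) : _root_.enorm (c • w) = |c| * _root_.enorm w := by
  unfold _root_.enorm
  have : ∑ i, (c • w) i ^ 2 = c ^ 2 * ∑ i, (w i) ^ 2 := by
    rw [Finset.mul_sum]; apply Finset.sum_congr rfl; intro i _; simp [mul_pow]
  rw [this, Real.sqrt_mul (sq_nonneg c), Real.sqrt_sq_eq_abs]

lemma enorm_mulVec_le (B : Matrix (Fin n) (Fin n) ℝ) (x : Fin n → ℝ) :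
    _root_.enorm (B.mulVec x) ≤ (∑ i, ∑ j, |B i j|) * _root_.enorm x := by
  calc _root_.enorm (B.mulVec x) ≤ ∑ i, |B.mulVec x i| := enorm_le_sum _
    _ ≤ ∑ i, ∑ j, |B i j| * _root_.enorm x := by
        apply Finset.sum_le_sum; intro i _
        calc |B.mulVec x i| = |∑ j, B i j * x j| := by rfl
          _ ≤ ∑ j, |B i j * x j| := Finset.abs_sum_le_sum_abs _ _
          _ ≤ ∑ j, |B i j| * _root_.enorm x := by
              apply Finset.sum_le_sum; intro j _
              rw [abs_mul]
              exact mul_le_mul_of_nonneg_left (abs_le_enorm x j) (abs_nonneg _)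
    _ = (∑ i, ∑ j, |B i j|) * _root_.enorm x := by
        rw [Finset.sum_mul]
        apply Finset.sum_congr rfl
        intro i _
        rw [Finset.sum_mul]

lemma enorm_mulVec_sq (B : Matrix (Fin n) (Fin n) ℝ) (x : Fin n → ℝ) :
    _root_.enorm (B.mulVec x) ^ 2 = x ⬝ᵥ ((Bᵀ * B).mulVec x) := by
  rw [enorm_sq]
  have h1 : ∑ i, (B.mulVec x i) ^ 2 = (B.mulVec x) ⬝ᵥ (B.mulVec x) := by
    unfold dotProduct; apply Finset.sum_congr rfl; intro i _; ring
  rw [h1, dotProduct_mulVec, ← mulVec_transpose, mulVec_mulVec, dotProduct_comm]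

lemma intVec_eq_zero {v : Fin n → ℤ} : intVec v = 0 ↔ v = 0 := by
  constructor
  · intro h; funext i; have := congrFun h i; simpa [intVec] using this
  · intro h; funext i; simp [h, intVec]

lemma intVec_neg (v : Fin n → ℤ) : intVec (-v) = -intVec v := by
  funext i; simp [intVec]

lemma intVec_inj {v w : Fin n → ℤ} (h : intVec v = intVec w) : v = w := by
  funext i; have := congrFun h i; simpa [intVec] using this

end Aux11

namespace Aux11

variable {n : ℕ} {A : Matrix (Fin n) (Fin n) ℝ}

/-- The value set defining `syst1`. -/
def VSet (A : Matrix (Fin n) (Fin n) ℝ) : Set ℝ :=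
  {r : ℝ | ∃ v : Fin n → ℤ, v ≠ 0 ∧ _root_.enorm (A.mulVec (intVec v)) = r}

lemma syst1_eq : syst1 A = sInf (VSet A) := rfl

lemma vset_bddBelow : BddBelow (VSet A) :=
  ⟨0, by rintro r ⟨v, _, rfl⟩; exact enorm_nonneg _⟩

lemma syst1_le {v : Fin n → ℤ} (hv : v ≠ 0) :
    syst1 A ≤ _root_.enorm (A.mulVec (intVec v)) :=
  csInf_le vset_bddBelow ⟨v, hv, rfl⟩

lemma mulVec_intVec_ne_zero (hA : IsUnit A.det) {v : Fin n → ℤ} (hv : v ≠ 0) :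
    A.mulVec (intVec v) ≠ 0 := by
  intro h
  apply hv
  apply intVec_eq_zero.mp
  have : A⁻¹.mulVec (A.mulVec (intVec v)) = intVec v := by
    rw [mulVec_mulVec, Matrix.nonsing_inv_mul A hA, Matrix.one_mulVec]
  rw [← this, h, Matrix.mulVec_zero]

lemma enorm_mulVec_pos (hA : IsUnit A.det) {v : Fin n → ℤ} (hv : v ≠ 0) :
    0 < _root_.enorm (A.mulVec (intVec v)) := by
  rcases lt_or_eq_of_le (enorm_nonneg (A.mulVec (intVec v))) with h | h
  · exact h
  · exact absurd (enorm_eq_zero.mp h.symm) (mulVec_intVec_ne_zero hA hv)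

/-- Lower bound: `_root_.enorm x ≤ K * _root_.enorm (A x)` for invertible `A`. -/
lemma exists_lower_bound (hA : IsUnit A.det) :
    ∃ K : ℝ, 0 < K ∧ ∀ x : Fin n → ℝ, _root_.enorm x ≤ K * _root_.enorm (A.mulVec x) := by
  refine ⟨(∑ i, ∑ j, |A⁻¹ i j|) + 1, by positivity, fun x => ?_⟩
  have h1 : A⁻¹.mulVec (A.mulVec x) = x := by
    rw [mulVec_mulVec, Matrix.nonsing_inv_mul A hA, Matrix.one_mulVec]
  calc _root_.enorm x = _root_.enorm (A⁻¹.mulVec (A.mulVec x)) := by rw [h1]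
    _ ≤ (∑ i, ∑ j, |A⁻¹ i j|) * _root_.enorm (A.mulVec x) := enorm_mulVec_le _ _
    _ ≤ ((∑ i, ∑ j, |A⁻¹ i j|) + 1) * _root_.enorm (A.mulVec x) := by
        apply mul_le_mul_of_nonneg_right _ (enorm_nonneg _)
        linarith

lemma finite_le_ball (hA : IsUnit A.det) (R : ℝ) :
    {v : Fin n → ℤ | _root_.enorm (A.mulVec (intVec v)) ≤ R}.Finite := by
  obtain ⟨K, hK, hKb⟩ := exists_lower_bound hA
  set N : ℤ := ⌈K * R⌉ with hN
  have hsub : {v : Fin n → ℤ | _root_.enorm (A.mulVec (intVec v)) ≤ R} ⊆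
      Set.univ.pi (fun _ : Fin n => Set.Icc (-N) N) := by
    intro v hv
    intro i _
    have h1 : |(v i : ℝ)| ≤ K * R := by
      calc |(v i : ℝ)| = |intVec v i| := rfl
        _ ≤ _root_.enorm (intVec v) := abs_le_enorm _ _
        _ ≤ K * _root_.enorm (A.mulVec (intVec v)) := hKb _
        _ ≤ K * R := mul_le_mul_of_nonneg_left hv (le_of_lt hK)
    have h2 : |(v i : ℝ)| ≤ (N : ℝ) := le_trans h1 (Int.le_ceil _)
    have h3 : |v i| ≤ N := by exact_mod_cast (by rwa [← Int.cast_abs] at h2 :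
      ((|v i| : ℤ) : ℝ) ≤ (N : ℝ))
    exact abs_le.mp h3
  exact Set.Finite.subset (Set.Finite.pi fun _ => Set.finite_Icc _ _) hsub

/-- Packaged facts: the systole is attained and positive. -/
lemma syst1_attained (hn : 0 < n) (hA : IsUnit A.det) :
    ∃ v : Fin n → ℤ, v ≠ 0 ∧ _root_.enorm (A.mulVec (intVec v)) = syst1 A := by
  classical
  set e : Fin n → ℤ := Pi.single ⟨0, hn⟩ 1 with he
  have he0 : e ≠ 0 := by
    intro h
    have := congrFun h ⟨0, hn⟩
    simp [he] at this
  set R := _root_.enorm (A.mulVec (intVec e)) with hR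
  have hfin : {v : Fin n → ℤ | _root_.enorm (A.mulVec (intVec v)) ≤ R}.Finite := finite_le_ball hA R
  set F : Set (Fin n → ℤ) := {v | v ≠ 0 ∧ _root_.enorm (A.mulVec (intVec v)) ≤ R} with hF
  have hFfin : F.Finite := hfin.subset (by intro v hv; exact hv.2)
  have hFne : F.Nonempty := ⟨e, he0, le_refl _⟩
  obtain ⟨v₀, hv₀F, hv₀min⟩ := Finset.exists_min_image hFfin.toFinset
    (fun v => _root_.enorm (A.mulVec (intVec v))) (by simpa using hFne)
  rw [Set.Finite.mem_toFinset] at hv₀F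
  refine ⟨v₀, hv₀F.1, le_antisymm ?_ (syst1_le hv₀F.1)⟩
  have hRmem : R ∈ VSet A := ⟨e, he0, hR.symm⟩
  apply le_csInf ⟨R, hRmem⟩
  rintro r ⟨w, hw0, rfl⟩
  by_cases hwR : _root_.enorm (A.mulVec (intVec w)) ≤ R
  · exact hv₀min w (by rw [Set.Finite.mem_toFinset]; exact ⟨hw0, hwR⟩)
  · push_neg at hwR
    exact le_trans (hv₀F.2) (le_of_lt hwR)

lemma syst1_pos (hn : 0 < n) (hA : IsUnit A.det) : 0 < syst1 A := by
  obtain ⟨v, hv, hveq⟩ := syst1_attained hn hA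
  rw [← hveq]
  exact enorm_mulVec_pos hA hv

lemma S1_finite (hn : 0 < n) (hA : IsUnit A.det) : (S1 A).Finite := by
  apply (finite_le_ball hA (syst1 A)).subset
  rintro v ⟨hv0, hveq⟩
  exact le_of_eq hveq

lemma S1_nonempty (hn : 0 < n) (hA : IsUnit A.det) : (S1 A).Nonempty := by
  obtain ⟨v, hv, hveq⟩ := syst1_attained hn hA
  exact ⟨v, hv, hveq⟩

lemma neg_mem_S1 {v : Fin n → ℤ} (hv : v ∈ S1 A) : -v ∈ S1 A := by
  refine ⟨by simpa using (neg_ne_zero.mpr hv.1), ?_⟩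
  rw [intVec_neg, Matrix.mulVec_neg, enorm_neg]
  exact hv.2

/-- The gap above the systole. -/
lemma exists_gap (hn : 0 < n) (hA : IsUnit A.det) :
    ∃ s₂ : ℝ, syst1 A < s₂ ∧ ∀ v : Fin n → ℤ, v ≠ 0 → v ∉ S1 A →
      s₂ ≤ _root_.enorm (A.mulVec (intVec v)) := by
  classical
  set m := syst1 A with hm
  set T : Set (Fin n → ℤ) := {v | v ≠ 0 ∧ _root_.enorm (A.mulVec (intVec v)) ≤ m + 1} \ S1 A with hT
  have hTfin : T.Finite := ((finite_le_ball hA (m + 1)).subset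
    (by rintro v ⟨⟨h1, h2⟩, h3⟩; exact h2)).subset (fun v hv => hv)
  by_cases hTne : T.Nonempty
  · obtain ⟨w₀, hw₀T, hw₀min⟩ := Finset.exists_min_image hTfin.toFinset
      (fun v => _root_.enorm (A.mulVec (intVec v))) (by simpa using hTne)
    rw [Set.Finite.mem_toFinset] at hw₀T
    refine ⟨min (m + 1) (_root_.enorm (A.mulVec (intVec w₀))), ?_, ?_⟩
    · apply lt_min (by linarith [])
      rcases lt_or_eq_of_le (syst1_le hw₀T.1.1) with h | h
      · exact h
      · exact absurd ⟨hw₀T.1.1, h.symm⟩ hw₀T.2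
    · intro v hv0 hvS
      by_cases hvR : _root_.enorm (A.mulVec (intVec v)) ≤ m + 1
      · exact le_trans (min_le_right _ _)
          (hw₀min v (by rw [Set.Finite.mem_toFinset]; exact ⟨⟨hv0, hvR⟩, hvS⟩))
      · push_neg at hvR
        exact le_trans (min_le_left _ _) (le_of_lt hvR)
  · refine ⟨m + 1, by linarith, fun v hv0 hvS => ?_⟩
    by_contra hlt
    push_neg at hlt
    exact hTne ⟨v, ⟨hv0, le_of_lt hlt⟩, hvS⟩

end Aux11

namespace Aux11

variable {n : ℕ} {A : Matrix (Fin n) (Fin n) ℝ}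

/-- Matrix whose `j`-th column is `intVec (v j)`. -/
def colMat (v : Fin n → (Fin n → ℤ)) : Matrix (Fin n) (Fin n) ℝ :=
  Matrix.of fun i j => (v j i : ℝ)

lemma colMat_transpose_row (v : Fin n → (Fin n → ℤ)) (i : Fin n) :
    (colMat v)ᵀ i = intVec (v i) := by
  funext j; rfl

lemma li_iff_det (v : Fin n → (Fin n → ℤ)) :
    LinearIndependent ℝ (fun i => intVec (v i)) ↔ (colMat v).det ≠ 0 := by
  have h1 : (fun i => intVec (v i)) = fun i => (colMat v)ᵀ i := by
    funext i; exact (colMat_transpose_row v i).symm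
  rw [h1, show (fun i => (colMat v)ᵀ i) = ((colMat v)ᵀ).row from rfl, linearIndependent_rows_iff_isUnit, Matrix.isUnit_iff_isUnit_det,
    Matrix.det_transpose, isUnit_iff_ne_zero]

lemma colMat_mulVec_single (v : Fin n → (Fin n → ℤ)) (i : Fin n) :
    (colMat v).mulVec (Pi.single i 1) = intVec (v i) := by
  rw [Matrix.mulVec_single]
  funext k
  simp [colMat, intVec]

/-- Existence of a linearly independent tuple of shortest vectors, from well-roundedness. -/
lemma exists_li_tuple (hWR : WellRounded A) :
    ∃ v : Fin n → (Fin n → ℤ), (∀ i, v i ∈ S1 A) ∧ (colMat v).det ≠ 0 := by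
  classical
  obtain ⟨b, hbsub, hbspan, hbli⟩ := exists_linearIndependent ℝ (intVec '' S1 A)
  rw [hWR] at hbspan
  have hfd : FiniteDimensional ℝ (Fin n → ℝ) := inferInstance
  have hbfin : b.Finite := hbli.setFinite
  have hfint : Fintype b := hbfin.fintype
  have hcard : Fintype.card b = n := by
    have h1 : Module.finrank ℝ (Fin n → ℝ) = n := by simp
    have h2 := finrank_span_set_eq_card hbli
    rw [hbspan, finrank_top, h1] at h2
    rw [← Set.toFinset_card]
    exact h2.symm
  have e : Fin n ≃ b := (finCongr hcard.symm).trans (Fintype.equivFin b).symm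
  have hchoice : ∀ i : Fin n, ∃ w : Fin n → ℤ, w ∈ S1 A ∧ intVec w = (e i : Fin n → ℝ) := by
    intro i
    have : (e i : Fin n → ℝ) ∈ intVec '' S1 A := hbsub (e i).2
    obtain ⟨w, hw, hweq⟩ := this
    exact ⟨w, hw, hweq⟩
  choose v hv1 hv2 using hchoice
  refine ⟨v, hv1, ?_⟩
  rw [← li_iff_det]
  have h3 : (fun i => intVec (v i)) = (Subtype.val : b → (Fin n → ℝ)) ∘ e := by
    funext i; rw [hv2 i]; rfl
  rw [h3]
  exact hbli.comp e e.injective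

end Aux11

namespace Aux11

variable {n : ℕ} {A : Matrix (Fin n) (Fin n) ℝ}

/-- A minimal-determinant linearly independent tuple of shortest vectors. -/
lemma exists_min_tuple (hn : 0 < n) (hA : IsUnit A.det) (hWR : WellRounded A) :
    ∃ v : Fin n → (Fin n → ℤ), (∀ i, v i ∈ S1 A) ∧ (colMat v).det ≠ 0 ∧
      ∀ w : Fin n → (Fin n → ℤ), (∀ i, w i ∈ S1 A) → (colMat w).det ≠ 0 →
        |(colMat v).det| ≤ |(colMat w).det| := by
  classical
  set P : Set (Fin n → (Fin n → ℤ)) :=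
    {w | (∀ i, w i ∈ S1 A) ∧ (colMat w).det ≠ 0} with hP
  have hPfin : P.Finite := by
    apply Set.Finite.subset (Set.Finite.pi (fun _ : Fin n => S1_finite hn hA))
    intro w hw i _
    exact hw.1 i
  have hPne : P.Nonempty := by
    obtain ⟨v, hv1, hv2⟩ := exists_li_tuple hWR
    exact ⟨v, hv1, hv2⟩
  obtain ⟨v, hvP, hvmin⟩ := Finset.exists_min_image hPfin.toFinset
    (fun w => |(colMat w).det|) (by simpa using hPne)
  rw [Set.Finite.mem_toFinset] at hvP
  refine ⟨v, hvP.1, hvP.2, fun w hw1 hw2 => ?_⟩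
  exact hvmin w (by rw [Set.Finite.mem_toFinset]; exact ⟨hw1, hw2⟩)

section coords

variable {v : Fin n → (Fin n → ℤ)}

/-- Cramer: determinant of the column-replaced matrix. -/
lemma det_update_eq (hV : IsUnit (colMat v).det) (w : Fin n → ℤ) (i : Fin n) :
    ((colMat v).updateCol i (intVec w)).det =
      (colMat v).det * ((colMat v)⁻¹.mulVec (intVec w)) i := by
  set V := colMat v with hVdef
  have h1 : (V.updateCol i (intVec w)).det = V.cramer (intVec w) i :=
    (Matrix.cramer_apply V (intVec w) i).symm
  rw [h1, Matrix.cramer_eq_adjugate_mulVec]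
  have hd : V.det ≠ 0 := by
    intro h; rw [h] at hV; simp at hV
  have h2 : V⁻¹ = (V.det)⁻¹ • V.adjugate := by
    rw [Matrix.inv_def, Ring.inverse_eq_inv]
  rw [h2]
  have h3 : ((V.det)⁻¹ • V.adjugate).mulVec (intVec w) =
      (V.det)⁻¹ • (V.adjugate.mulVec (intVec w)) := Matrix.smul_mulVec _ _ _
  rw [h3]
  simp [Pi.smul_apply, smul_eq_mul]
  field_simp

lemma update_colMat (w : Fin n → ℤ) (i : Fin n) :
    colMat (Function.update v i w) = (colMat v).updateCol i (intVec w) := by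
  classical
  ext k j
  by_cases h : j = i
  · subst h; simp [colMat, Matrix.updateCol_apply, Function.update, intVec]
  · simp [colMat, Matrix.updateCol_apply, Function.update, h, intVec]

/-- In the minimal tuple, every nonzero coordinate of a shortest vector has `1 ≤ |c i|`. -/
lemma coord_ge_one (hA : IsUnit A.det)
    (hv : ∀ i, v i ∈ S1 A) (hV : (colMat v).det ≠ 0)
    (hmin : ∀ w : Fin n → (Fin n → ℤ), (∀ i, w i ∈ S1 A) → (colMat w).det ≠ 0 →
      |(colMat v).det| ≤ |(colMat w).det|)
    {w : Fin n → ℤ} (hw : w ∈ S1 A) (i : Fin n)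
    (hci : ((colMat v)⁻¹.mulVec (intVec w)) i ≠ 0) :
    1 ≤ |((colMat v)⁻¹.mulVec (intVec w)) i| := by
  classical
  set V := colMat v with hVdef
  set c := V⁻¹.mulVec (intVec w) with hc
  have hVu : IsUnit V.det := isUnit_iff_ne_zero.mpr hV
  have hdet' : (colMat (Function.update v i w)).det = V.det * c i := by
    rw [update_colMat, det_update_eq hVu]
  have hne : (colMat (Function.update v i w)).det ≠ 0 := by
    rw [hdet']; exact mul_ne_zero hV hci
  have hmem : ∀ j, Function.update v i w j ∈ S1 A := by
    intro j
    by_cases h : j = i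
    · subst h; simpa using hw
    · simpa [Function.update, h] using hv j
  have h1 := hmin _ hmem hne
  rw [hdet', abs_mul] at h1
  have h2 : 0 < |V.det| := abs_pos.mpr hV
  nlinarith [abs_nonneg (c i)]

end coords

end Aux11

namespace Aux11

variable {n : ℕ} {A : Matrix (Fin n) (Fin n) ℝ} {v : Fin n → (Fin n → ℤ)}

lemma colMat_inv_vec (hV : (colMat v).det ≠ 0) (x : Fin n → ℝ) :
    (colMat v).mulVec ((colMat v)⁻¹.mulVec x) = x := by
  rw [mulVec_mulVec, Matrix.mul_nonsing_inv _ (isUnit_iff_ne_zero.mpr hV),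
    Matrix.one_mulVec]

lemma inv_colMat_single (hV : (colMat v).det ≠ 0) (i : Fin n) :
    (colMat v)⁻¹.mulVec (intVec (v i)) = Pi.single i 1 := by
  rw [← colMat_mulVec_single v i, mulVec_mulVec,
    Matrix.nonsing_inv_mul _ (isUnit_iff_ne_zero.mpr hV), Matrix.one_mulVec]

lemma sum_sq_single_one (i : Fin n) : ∑ j, ((Pi.single i 1 : Fin n → ℝ) j) ^ 2 = 1 := by
  classical
  rw [Finset.sum_eq_single i]
  · simp
  · intro b _ hb; simp [Pi.single_apply, hb]
  · intro h; exact absurd (Finset.mem_univ i) h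

lemma shortest_coord_trichotomy (hn : 0 < n) (hA : IsUnit A.det)
    (hv : ∀ i, v i ∈ S1 A) (hV : (colMat v).det ≠ 0)
    (hmin : ∀ w : Fin n → (Fin n → ℤ), (∀ i, w i ∈ S1 A) → (colMat w).det ≠ 0 →
      |(colMat v).det| ≤ |(colMat w).det|)
    {w : Fin n → ℤ} (hw : w ∈ S1 A) :
    (∃ i, w = v i ∨ w = -(v i)) ∨
      2 ≤ ∑ j, ((colMat v)⁻¹.mulVec (intVec w) j) ^ 2 := by
  classical
  set V := colMat v with hVdef
  set c := V⁻¹.mulVec (intVec w) with hc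
  have hrec : V.mulVec c = intVec w := colMat_inv_vec hV (intVec w)
  have hcne : c ≠ 0 := by
    intro h
    apply hw.1
    apply intVec_eq_zero.mp
    rw [← hrec, h, Matrix.mulVec_zero]
  obtain ⟨i₀, hi₀⟩ : ∃ i, c i ≠ 0 := by
    by_contra h; push_neg at h; exact hcne (funext h)
  by_cases hsingle : ∀ j, j ≠ i₀ → c j = 0
  · -- single nonzero coordinate: w = ± v i₀
    left
    have hwc : intVec w = c i₀ • intVec (v i₀) := by
      rw [← hrec]
      funext k
      have : V.mulVec c k = ∑ j, V k j * c j := rfl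
      rw [this, Finset.sum_eq_single i₀]
      · simp [hVdef, colMat, intVec, mul_comm]
      · intro b _ hb; rw [hsingle b hb, mul_zero]
      · intro h; exact absurd (Finset.mem_univ i₀) h
    have hm := hw.2
    have hmi := (hv i₀).2
    have henorm : _root_.enorm (A.mulVec (intVec w)) = |c i₀| * _root_.enorm (A.mulVec (intVec (v i₀))) := by
      rw [hwc, Matrix.mulVec_smul, enorm_smul]
    have hmpos : 0 < syst1 A := syst1_pos hn hA
    have habs : |c i₀| = 1 := by
      rw [hm, hmi] at henorm
      have := henorm
      nlinarith [abs_nonneg (c i₀)]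
    rcases abs_eq (by norm_num : (0:ℝ) ≤ 1) |>.mp habs with h1 | h1
    · refine ⟨i₀, Or.inl ?_⟩
      apply intVec_inj
      rw [hwc, h1, one_smul]
    · refine ⟨i₀, Or.inr ?_⟩
      apply intVec_inj
      rw [hwc, h1, intVec_neg]
      funext k; simp
  · -- at least two nonzero coordinates
    right
    push_neg at hsingle
    obtain ⟨j₀, hj₀ne, hj₀⟩ := hsingle
    have h1 : ∀ k, c k ≠ 0 → 1 ≤ (c k) ^ 2 := by
      intro k hk
      have h2 := coord_ge_one hA hv hV hmin hw k hk
      nlinarith [h2, sq_abs (c k), abs_nonneg (c k)]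
    calc (2:ℝ) = 1 + 1 := by norm_num
      _ ≤ (c i₀) ^ 2 + (c j₀) ^ 2 := add_le_add (h1 i₀ hi₀) (h1 j₀ hj₀)
      _ = ∑ j ∈ {i₀, j₀}, (c j) ^ 2 := by
          rw [Finset.sum_pair (Ne.symm hj₀ne)]
      _ ≤ ∑ j, (c j) ^ 2 := Finset.sum_le_sum_of_subset_of_nonneg
          (Finset.subset_univ _) (fun j _ _ => sq_nonneg _)

end Aux11

namespace Aux11

variable {n : ℕ}

section sqrtmat

variable {M : Matrix (Fin n) (Fin n) ℝ} (hM : M.IsHermitian)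

/-- The square root of `1 + t • M`, via the spectral theorem. -/
noncomputable def Nmat (t : ℝ) : Matrix (Fin n) (Fin n) ℝ :=
  (hM.eigenvectorUnitary : Matrix (Fin n) (Fin n) ℝ) *
    Matrix.diagonal (fun i => Real.sqrt (1 + t * hM.eigenvalues i)) *
    star (hM.eigenvectorUnitary : Matrix (Fin n) (Fin n) ℝ)

lemma spectral_real :
    M = (hM.eigenvectorUnitary : Matrix (Fin n) (Fin n) ℝ) *
      Matrix.diagonal hM.eigenvalues *
      star (hM.eigenvectorUnitary : Matrix (Fin n) (Fin n) ℝ) := by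
  have h := hM.spectral_theorem
  have h2 : (RCLike.ofReal ∘ hM.eigenvalues : Fin n → ℝ) = hM.eigenvalues := by
    funext i; simp
  rw [h2] at h
  exact h

lemma Nmat_star (t : ℝ) : star (Nmat hM t) = Nmat hM t := by
  unfold Nmat
  rw [StarMul.star_mul, StarMul.star_mul, star_star]
  rw [Matrix.star_eq_conjTranspose (Matrix.diagonal _), Matrix.diagonal_conjTranspose]
  have : (star (fun i => Real.sqrt (1 + t * hM.eigenvalues i)) :
      Fin n → ℝ) = fun i => Real.sqrt (1 + t * hM.eigenvalues i) := by
    funext i; simp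
  rw [this, mul_assoc]

lemma Nmat_transpose (t : ℝ) : (Nmat hM t)ᵀ = Nmat hM t := by
  have h := Nmat_star hM t
  rwa [Matrix.star_eq_conjTranspose, Matrix.conjTranspose_eq_transpose_of_trivial] at h

lemma Nmat_mul_self {t : ℝ} (ht : ∀ i, 0 ≤ 1 + t * hM.eigenvalues i) :
    Nmat hM t * Nmat hM t = 1 + t • M := by
  set U : Matrix (Fin n) (Fin n) ℝ := (hM.eigenvectorUnitary : Matrix (Fin n) (Fin n) ℝ)
  have hsU : star U * U = 1 := Matrix.UnitaryGroup.star_mul_self hM.eigenvectorUnitary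
  have hUs : U * star U = 1 := mul_eq_one_comm.mpr hsU
  unfold Nmat
  set D : Matrix (Fin n) (Fin n) ℝ :=
    Matrix.diagonal (fun i => Real.sqrt (1 + t * hM.eigenvalues i)) with hD
  have key : U * D * star U * (U * D * star U) = U * (D * D) * star U := by
    calc U * D * star U * (U * D * star U) = U * D * (star U * U) * D * star U := by
          simp only [mul_assoc]
      _ = U * (D * D) * star U := by rw [hsU]; simp only [mul_one, mul_assoc]
  rw [key]
  have hDD : D * D = Matrix.diagonal (fun i => 1 + t * hM.eigenvalues i) := by
    rw [hD, Matrix.diagonal_mul_diagonal]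
    apply congrArg Matrix.diagonal
    funext i
    exact Real.mul_self_sqrt (ht i)
  rw [hDD]
  have hsplit : Matrix.diagonal (fun i => 1 + t * hM.eigenvalues i) =
      1 + t • Matrix.diagonal hM.eigenvalues := by
    ext i j
    by_cases h : i = j
    · subst h; simp [Matrix.diagonal_apply, Matrix.one_apply]
    · simp [Matrix.diagonal_apply, h, Matrix.one_apply]
  rw [hsplit, mul_add, add_mul, mul_one, hUs]
  congr 1
  rw [Matrix.mul_smul, Matrix.smul_mul]
  congr 1
  exact (spectral_real hM).symm

lemma Nmat_det (t : ℝ) :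
    (Nmat hM t).det = ∏ i, Real.sqrt (1 + t * hM.eigenvalues i) := by
  set U : Matrix (Fin n) (Fin n) ℝ := (hM.eigenvectorUnitary : Matrix (Fin n) (Fin n) ℝ)
  have hsU : star U * U = 1 := Matrix.UnitaryGroup.star_mul_self hM.eigenvectorUnitary
  have hUs : U * star U = 1 := mul_eq_one_comm.mpr hsU
  unfold Nmat
  rw [Matrix.det_mul, Matrix.det_mul]
  have : U.det * (Matrix.diagonal fun i => Real.sqrt (1 + t * hM.eigenvalues i)).det *
      (star U).det = (Matrix.diagonal fun i => Real.sqrt (1 + t * hM.eigenvalues i)).det *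
      (U * star U).det := by
    rw [Matrix.det_mul]; ring
  rw [this, hUs, Matrix.det_one, mul_one, Matrix.det_diagonal]

lemma Nmat_continuous : Continuous (fun t : ℝ => Nmat hM t) := by
  apply Continuous.matrix_mul
  apply Continuous.matrix_mul continuous_const
  · apply Continuous.matrix_diagonal
    apply continuous_pi
    intro i
    exact Real.continuous_sqrt.comp (by continuity)
  · exact continuous_const

lemma Nmat_zero : Nmat hM 0 = 1 := by
  unfold Nmat
  have : (Matrix.diagonal fun i => Real.sqrt (1 + 0 * hM.eigenvalues i)) = 1 := by
    rw [← Matrix.diagonal_one]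
    congr 1
    funext i
    simp
  rw [this, mul_one]
  exact mul_eq_one_comm.mpr (Matrix.UnitaryGroup.star_mul_self hM.eigenvectorUnitary)

end sqrtmat

end Aux11

open Pointwise
namespace Aux11

variable {n : ℕ} {A : Matrix (Fin n) (Fin n) ℝ}

lemma enorm_smul_mulVec {c : ℝ} (hc : 0 < c) (x : Fin n → ℝ) :
    _root_.enorm ((c • A).mulVec x) = c * _root_.enorm (A.mulVec x) := by
  rw [Matrix.smul_mulVec, enorm_smul, abs_of_pos hc]

lemma vset_smul {c : ℝ} (hc : 0 < c) : VSet (c • A) = c • VSet A := by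
  ext r
  constructor
  · rintro ⟨w, hw, rfl⟩
    exact ⟨_root_.enorm (A.mulVec (intVec w)), ⟨w, hw, rfl⟩, (enorm_smul_mulVec hc _).symm⟩
  · rintro ⟨r₀, ⟨w, hw, rfl⟩, rfl⟩
    exact ⟨w, hw, enorm_smul_mulVec hc _⟩

lemma syst1_smul {c : ℝ} (hc : 0 < c) : syst1 (c • A) = c * syst1 A := by
  rw [syst1_eq, syst1_eq, vset_smul hc, Real.sInf_smul_of_nonneg (le_of_lt hc)]
  rfl

lemma S1_smul {c : ℝ} (hc : 0 < c) : S1 (c • A) = S1 A := by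
  ext w
  unfold S1
  simp only [Set.mem_setOf_eq]
  constructor
  · rintro ⟨hw, heq⟩
    refine ⟨hw, ?_⟩
    rw [enorm_smul_mulVec hc, syst1_smul hc] at heq
    exact mul_left_cancel₀ (ne_of_gt hc) heq
  · rintro ⟨hw, heq⟩
    refine ⟨hw, ?_⟩
    rw [enorm_smul_mulVec hc, syst1_smul hc, heq]

lemma wellRounded_smul {c : ℝ} (hc : 0 < c) : WellRounded (c • A) ↔ WellRounded A := by
  unfold WellRounded
  rw [S1_smul hc]

end Aux11

set_option maxHeartbeats 1000000

namespace Aux11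

variable {n : ℕ}

lemma le_of_sq_le {a b : ℝ} (ha : 0 ≤ a) (hb : 0 ≤ b) (h : a ^ 2 ≤ b ^ 2) : a ≤ b := by
  nlinarith

lemma eq_of_sq_eq {a b : ℝ} (ha : 0 ≤ a) (hb : 0 ≤ b) (h : a ^ 2 = b ^ 2) : a = b := by
  nlinarith

lemma main_perturb {A : Matrix (Fin n) (Fin n) ℝ} (hn : 0 < n) (hdet : A.det = 1)
    (hWR : WellRounded A) :
    ∃ v : Fin n → (Fin n → ℤ), LinearIndependent ℝ (fun i => intVec (v i)) ∧
    ∃ φ : ℝ → Matrix (Fin n) (Fin n) ℝ, ContinuousAt φ 0 ∧ φ 0 = A ∧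
      ∃ δ : ℝ, 0 < δ ∧ ∀ t : ℝ, 0 < t → t < δ →
        (φ t).det = 1 ∧ WellRounded (φ t) ∧
          S1 (φ t) = {w | ∃ i, w = v i ∨ w = -(v i)} := by
  classical
  have hA : IsUnit A.det := by rw [hdet]; exact isUnit_one
  set m := syst1 A with hmdef
  have hm : 0 < m := syst1_pos hn hA
  obtain ⟨v, hv, hVdet, hmin⟩ := exists_min_tuple hn hA hWR
  set V := colMat v with hVdef
  set W := V⁻¹ with hWdef
  set G := Aᵀ * A with hGdef
  set Bq := (m ^ 2) • (Wᵀ * W) with hBqdef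
  set M := (A⁻¹)ᵀ * (Bq - G) * A⁻¹ with hMdef
  have hBqT : Bqᵀ = Bq := by
    rw [hBqdef, Matrix.transpose_smul, Matrix.transpose_mul, Matrix.transpose_transpose]
  have hGT : Gᵀ = G := by
    rw [hGdef, Matrix.transpose_mul, Matrix.transpose_transpose]
  have hM : M.IsHermitian := by
    unfold Matrix.IsHermitian
    rw [Matrix.conjTranspose_eq_transpose_of_trivial, hMdef,
      Matrix.transpose_mul, Matrix.transpose_mul, Matrix.transpose_transpose,
      Matrix.transpose_sub, hBqT, hGT, mul_assoc]
  set d := hM.eigenvalues with hddef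
  set Sd := ∑ i, |d i| with hSddef
  have hSd : 0 ≤ Sd := Finset.sum_nonneg fun i _ => abs_nonneg _
  set δ₁ : ℝ := 1 / (1 + Sd) with hδ₁def
  have hδ₁ : 0 < δ₁ := by positivity
  have hpos : ∀ t : ℝ, 0 ≤ t → t < δ₁ → ∀ i, 0 < 1 + t * d i := by
    intro t ht htδ i
    have h1 : |d i| ≤ Sd := Finset.single_le_sum (fun j _ => abs_nonneg (d j))
      (Finset.mem_univ i)
    have h2 : t * |d i| < 1 := by
      calc t * |d i| ≤ t * (1 + Sd) := by
            apply mul_le_mul_of_nonneg_left _ ht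
            linarith
        _ < δ₁ * (1 + Sd) := by
            apply mul_lt_mul_of_pos_right htδ
            linarith
        _ = 1 := by rw [hδ₁def]; field_simp
    have h3 : -(t * d i) ≤ t * |d i| := by
      rw [← mul_neg]
      apply mul_le_mul_of_nonneg_left _ ht
      exact neg_le_abs _
    linarith
  obtain ⟨s₂, hs₂m, hs₂⟩ := exists_gap hn hA
  set δ₂ : ℝ := 1 - m ^ 2 / s₂ ^ 2 with hδ₂def
  have hs₂pos : 0 < s₂ := lt_trans hm hs₂m
  have hδ₂ : 0 < δ₂ := by
    rw [hδ₂def]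
    have : m ^ 2 / s₂ ^ 2 < 1 := by
      rw [div_lt_one (by positivity)]
      nlinarith
    linarith
  set δ : ℝ := min δ₁ δ₂ with hδdef
  have hδ : 0 < δ := lt_min hδ₁ hδ₂
  -- the path
  set φ : ℝ → Matrix (Fin n) (Fin n) ℝ := fun t =>
    ((∏ i, Real.sqrt (1 + t * d i)) ^ (-(1:ℝ)/n)) • (Nmat hM t * A) with hφdef
  have hli : LinearIndependent ℝ (fun i => intVec (v i)) := (li_iff_det v).mpr hVdet
  refine ⟨v, hli, φ, ?_, ?_, δ, hδ, ?_⟩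
  · -- continuity at 0
    have hp : Continuous (fun t : ℝ => ∏ i, Real.sqrt (1 + t * d i)) := by
      apply continuous_finset_prod
      intro i _
      exact Real.continuous_sqrt.comp (continuous_const.add (continuous_id.mul continuous_const))
    have hp0 : (∏ i, Real.sqrt (1 + (0:ℝ) * d i)) = 1 := by
      apply Finset.prod_eq_one
      intro i _
      simp
    have hc : ContinuousAt (fun t : ℝ => (∏ i, Real.sqrt (1 + t * d i)) ^ (-(1:ℝ)/n)) 0 := by
      apply ContinuousAt.comp (g := fun x : ℝ => x ^ (-(1:ℝ)/n))
      · rw [hp0]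
        exact Real.continuousAt_rpow_const 1 _ (Or.inl one_ne_zero)
      · exact hp.continuousAt
    exact hc.smul ((Nmat_continuous hM).matrix_mul continuous_const).continuousAt
  · -- value at 0
    rw [hφdef]
    simp only
    rw [Nmat_zero]
    have hp0 : (∏ i, Real.sqrt (1 + (0:ℝ) * d i)) = 1 := by
      apply Finset.prod_eq_one
      intro i _
      simp
    rw [hp0, Real.one_rpow, one_smul, one_mul]
  · -- properties for 0 < t < δ
    intro t ht htδ
    have htδ₁ : t < δ₁ := lt_of_lt_of_le htδ (min_le_left _ _)
    have htδ₂ : t < δ₂ := lt_of_lt_of_le htδ (min_le_right _ _)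
    have hposd : ∀ i, 0 < 1 + t * d i := hpos t (le_of_lt ht) htδ₁
    set p : ℝ := ∏ i, Real.sqrt (1 + t * d i) with hpdef
    have hp : 0 < p := Finset.prod_pos fun i _ => Real.sqrt_pos.mpr (hposd i)
    set c : ℝ := p ^ (-(1:ℝ)/n) with hcdef
    have hc : 0 < c := Real.rpow_pos_of_pos hp _
    set At := Nmat hM t * A with hAtdef
    have hφt : φ t = c • At := rfl
    -- determinant
    have hdetAt : At.det = p := by
      rw [hAtdef, Matrix.det_mul, Nmat_det hM t, hdet, mul_one]
    have hdetφ : (φ t).det = 1 := by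
      rw [hφt, Matrix.det_smul, hdetAt, Fintype.card_fin]
      have : (c : ℝ) ^ (n : ℕ) = p⁻¹ := by
        rw [hcdef, ← Real.rpow_natCast (p ^ (-(1:ℝ)/n)) n, ← Real.rpow_mul (le_of_lt hp)]
        have hne : (n : ℝ) ≠ 0 := Nat.cast_ne_zero.mpr hn.ne'
        have : (-(1:ℝ)/n) * n = -1 := by field_simp
        rw [this, Real.rpow_neg_one]
      rw [this, inv_mul_cancel₀ (ne_of_gt hp)]
    -- Gram identity
    have hgram : Atᵀ * At = (1 - t) • G + t • Bq := by
      rw [hAtdef, Matrix.transpose_mul, Nmat_transpose hM]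
      have h1 : Aᵀ * Nmat hM t * (Nmat hM t * A) = Aᵀ * (Nmat hM t * Nmat hM t) * A := by
        simp only [mul_assoc]
      rw [h1, Nmat_mul_self hM (fun i => le_of_lt (hposd i))]
      have h2 : Aᵀ * (1 + t • M) * A = G + t • (Aᵀ * M * A) := by
        rw [mul_add, add_mul, mul_one, Matrix.mul_smul, Matrix.smul_mul]
      rw [h2]
      have h3 : Aᵀ * M * A = Bq - G := by
        rw [hMdef]
        have hinv1 : Aᵀ * (A⁻¹)ᵀ = 1 := by
          rw [← Matrix.transpose_mul, Matrix.nonsing_inv_mul A hA, Matrix.transpose_one]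
        have hinv2 : A⁻¹ * A = 1 := Matrix.nonsing_inv_mul A hA
        calc Aᵀ * ((A⁻¹)ᵀ * (Bq - G) * A⁻¹) * A
            = (Aᵀ * (A⁻¹)ᵀ) * (Bq - G) * (A⁻¹ * A) := by simp only [mul_assoc]
          _ = Bq - G := by rw [hinv1, hinv2, one_mul, mul_one]
      rw [h3]
      rw [smul_sub, sub_smul, one_smul]
      abel
    -- quadratic values
    have hqval : ∀ x : Fin n → ℝ, _root_.enorm (At.mulVec x) ^ 2 =
        (1 - t) * _root_.enorm (A.mulVec x) ^ 2 + t * (m ^ 2 * _root_.enorm (W.mulVec x) ^ 2) := by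
      intro x
      have hBqq : x ⬝ᵥ Bq.mulVec x = m ^ 2 * _root_.enorm (W.mulVec x) ^ 2 := by
        rw [hBqdef, Matrix.smul_mulVec, dotProduct_smul, smul_eq_mul,
          ← enorm_mulVec_sq]
      rw [enorm_mulVec_sq, hgram]
      rw [Matrix.add_mulVec, Matrix.smul_mulVec, Matrix.smul_mulVec]
      rw [dotProduct_add, dotProduct_smul, dotProduct_smul, smul_eq_mul, smul_eq_mul]
      rw [hBqq, hGdef, ← enorm_mulVec_sq]
    -- values on the chosen tuple
    have hWvi : ∀ i, _root_.enorm (W.mulVec (intVec (v i))) ^ 2 = 1 := by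
      intro i
      rw [hWdef, hVdef, inv_colMat_single hVdet, enorm_sq]
      exact sum_sq_single_one i
    have hAvi : ∀ i, _root_.enorm (A.mulVec (intVec (v i))) = m := fun i => (hv i).2
    have hfvi : ∀ i, _root_.enorm (At.mulVec (intVec (v i))) = m := by
      intro i
      apply eq_of_sq_eq (enorm_nonneg _) (le_of_lt hm)
      rw [hqval, hWvi, hAvi]
      ring
    have hfneg : ∀ w : Fin n → ℤ, _root_.enorm (At.mulVec (intVec (-w))) =
        _root_.enorm (At.mulVec (intVec w)) := by
      intro w
      rw [intVec_neg, Matrix.mulVec_neg, enorm_neg]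
    -- strict bounds
    have hS1big : ∀ w : Fin n → ℤ, w ∈ S1 A → (¬ ∃ i, w = v i ∨ w = -(v i)) →
        m ^ 2 + t * m ^ 2 ≤ _root_.enorm (At.mulVec (intVec w)) ^ 2 := by
      intro w hw hnot
      rcases shortest_coord_trichotomy hn hA hv hVdet hmin hw with h | h
      · exact absurd h hnot
      · have h2 : 2 ≤ _root_.enorm (W.mulVec (intVec w)) ^ 2 := by
          rw [hWdef, hVdef, enorm_sq]
          exact h
        have key : 0 ≤ t * (m ^ 2 * (_root_.enorm (W.mulVec (intVec w)) ^ 2 - 2)) :=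
          mul_nonneg (le_of_lt ht) (mul_nonneg (sq_nonneg m) (by linarith))
        rw [hqval, hw.2]
        nlinarith [key]
    have houtside : ∀ w : Fin n → ℤ, w ≠ 0 → w ∉ S1 A →
        m ^ 2 < _root_.enorm (At.mulVec (intVec w)) ^ 2 := by
      intro w hw0 hwS
      have h1 : s₂ ≤ _root_.enorm (A.mulVec (intVec w)) := hs₂ w hw0 hwS
      have h2 : s₂ ^ 2 ≤ _root_.enorm (A.mulVec (intVec w)) ^ 2 := by
        apply pow_le_pow_left₀ (le_of_lt hs₂pos) h1
      have h3 : (1 - t) * s₂ ^ 2 ≤ (1 - t) * _root_.enorm (A.mulVec (intVec w)) ^ 2 := by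
        apply mul_le_mul_of_nonneg_left h2
        have : t < 1 := by
          rw [hδ₂def] at htδ₂
          have : 0 < m ^ 2 / s₂ ^ 2 := by positivity
          linarith
        linarith
      have h4 : m ^ 2 < (1 - t) * s₂ ^ 2 := by
        rw [hδ₂def] at htδ₂
        have hs2 : 0 < s₂ ^ 2 := by positivity
        have h5 : m ^ 2 / s₂ ^ 2 < 1 - t := by linarith
        have h6 := (div_lt_iff₀ hs2).mp h5
        nlinarith
      have h5 : 0 ≤ t * (m ^ 2 * _root_.enorm (W.mulVec (intVec w)) ^ 2) := by positivity
      rw [hqval]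
      linarith
    -- the systole of At
    have hAtdet : IsUnit At.det := by rw [hdetAt]; exact isUnit_iff_ne_zero.mpr (ne_of_gt hp)
    have hsyst : syst1 At = m := by
      apply le_antisymm
      · rw [← hfvi ⟨0, hn⟩]
        exact syst1_le (hv ⟨0, hn⟩).1
      · have hmem : _root_.enorm (At.mulVec (intVec (v ⟨0, hn⟩))) ∈ VSet At :=
          ⟨v ⟨0, hn⟩, (hv ⟨0, hn⟩).1, rfl⟩
        apply le_csInf ⟨_, hmem⟩
        rintro r ⟨w, hw0, rfl⟩
        by_cases hwS : w ∈ S1 A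
        · by_cases hnot : ∃ i, w = v i ∨ w = -(v i)
          · obtain ⟨i, hi | hi⟩ := hnot
            · rw [hi, hfvi]
            · rw [hi, hfneg, hfvi]
          · apply le_of_sq_le (le_of_lt hm) (enorm_nonneg _)
            have hbig := hS1big w hwS hnot
            nlinarith [hbig, mul_pos ht (mul_pos hm hm)]
        · apply le_of_sq_le (le_of_lt hm) (enorm_nonneg _)
          have := houtside w hw0 hwS
          linarith
    -- S1 of At
    have hS1At : S1 At = {w | ∃ i, w = v i ∨ w = -(v i)} := by
      ext w
      constructor
      · rintro ⟨hw0, hweq⟩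
        rw [hsyst] at hweq
        by_contra hnot
        by_cases hwS : w ∈ S1 A
        · have hbig := hS1big w hwS hnot
          rw [hweq] at hbig
          have ht2 : 0 < t * m ^ 2 := by positivity
          nlinarith [hbig, ht2]
        · have hout := houtside w hw0 hwS
          rw [hweq] at hout
          nlinarith [hout]
      · rintro ⟨i, hi | hi⟩
        · subst hi
          refine ⟨(hv i).1, ?_⟩
          rw [hsyst]
          exact hfvi i
        · subst hi
          refine ⟨by simpa using neg_ne_zero.mpr (hv i).1, ?_⟩
          rw [hsyst, hfneg, hfvi]
    -- well-roundedness of At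
    have hWRAt : WellRounded At := by
      unfold WellRounded
      rw [hS1At]
      rw [eq_top_iff]
      haveI : Nonempty (Fin n) := ⟨⟨0, hn⟩⟩
      have hspan : Submodule.span ℝ (Set.range fun i => intVec (v i)) = ⊤ := by
        apply hli.span_eq_top_of_card_eq_finrank
        simp
      rw [← hspan]
      apply Submodule.span_mono
      rintro x ⟨i, rfl⟩
      exact ⟨v i, ⟨i, Or.inl rfl⟩, rfl⟩
    -- transfer along the scalar
    refine ⟨hdetφ, ?_, ?_⟩
    · rw [hφt, wellRounded_smul hc]
      exact hWRAt
    · rw [hφt, S1_smul hc]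
      exact hS1At

end Aux11

/-- the well-rounded elements having exactly `2n` shortest vectors
`{±v₁,…,±v_n}` forming a symmetric linearly independent set are dense in the set of
well-rounded elements of `SL_n(ℝ)`. -/
theorem stmt11 (n : ℕ) (hn : 0 < n) :
    ∀ A : {A : Matrix (Fin n) (Fin n) ℝ // A.det = 1}, WellRounded A.1 →
      A ∈ closure {A' : {A : Matrix (Fin n) (Fin n) ℝ // A.det = 1} |
        WellRounded A'.1 ∧ ∃ v : Fin n → (Fin n → ℤ),
          LinearIndependent ℝ (fun i => intVec (v i)) ∧
          S1 A'.1 = {w | ∃ i, w = v i ∨ w = -(v i)}} := by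
  classical
  intro A hWR
  obtain ⟨v, hli, φ, hcont, hφ0, δ, hδ, hprop⟩ := Aux11.main_perturb hn A.2 hWR
  set ψ : ℝ → {A : Matrix (Fin n) (Fin n) ℝ // A.det = 1} := fun t =>
    if h : (φ t).det = 1 then ⟨φ t, h⟩ else A with hψ
  have hev : ∀ᶠ t in nhdsWithin (0:ℝ) (Set.Ioi 0), 0 < t ∧ t < δ := by
    filter_upwards [Ioo_mem_nhdsGT_of_mem (Set.left_mem_Ico.mpr hδ)] with t ht
    exact ⟨ht.1, ht.2⟩
  have htendφ : Filter.Tendsto φ (nhdsWithin (0:ℝ) (Set.Ioi 0)) (nhds A.1) := by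
    have h1 : Filter.Tendsto φ (nhds 0) (nhds A.1) := by
      rw [← hφ0]
      exact hcont.tendsto
    exact h1.mono_left nhdsWithin_le_nhds
  have htend : Filter.Tendsto ψ (nhdsWithin (0:ℝ) (Set.Ioi 0)) (nhds A) := by
    rw [tendsto_subtype_rng]
    apply Filter.Tendsto.congr' _ htendφ
    filter_upwards [hev] with t ht
    have h1 := hprop t ht.1 ht.2
    rw [hψ]
    simp only [dif_pos h1.1]
  apply mem_closure_of_tendsto htend
  filter_upwards [hev] with t ht
  have h1 := hprop t ht.1 ht.2
  have hψt : ψ t = ⟨φ t, h1.1⟩ := by rw [hψ]; simp only [dif_pos h1.1]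
  rw [hψt]
  exact ⟨h1.2.1, v, hli, h1.2.2⟩
end
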